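/- Let G be a finite group and ω ∈ Z³(G, k*) a normalized 3-cocycle. Then the transgression τ(ω) defined by τ(ω)(g,h)(x) = ω(g, h, h^{-1}g^{-1}xgh) ω(x, g, h) / ω(g, g^{-1}xg, h) is a 2-cocycle for G with values in the group algebra functions on G under the adjoint action: for all g,h,l,x ∈ G, τ(ω)(g,h)(x) τ(ω)(gh, l)(x) = τ(ω)(h,l)(g^{-1}xg) τ(ω)(g, hl)(x). -/

import Mathlib

/-- The transgression `τ(ω)` of a normalized 3-cocycle `ω ∈ Z³(G, k*)`
is a 2-cocycle for `G` with values in `k*`-valued functions on `G` with the adjoint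
action of `G` on the argument. -/
theorem stmt_18 {G : Type*} [Group G] {k : Type*} [Field k]
    (ω : G → G → G → kˣ)
    (hcocycle : ∀ g h K l : G,
      ω h K l * ω g (h * K) l * ω g h K = ω g h (K * l) * ω (g * h) K l)
    (hnorm : ∀ g h K : G, g = 1 ∨ h = 1 ∨ K = 1 → ω g h K = 1)
    (τ : G → G → G → kˣ)
    (hτ : ∀ g h x : G, τ g h x =
      ω g h (h⁻¹ * g⁻¹ * x * g * h) * ω x g h * (ω g (g⁻¹ * x * g) h)⁻¹) :
    ∀ g h l x : G,
      τ g h x * τ (g * h) l x = τ h l (g⁻¹ * x * g) * τ g (h * l) x := by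
  intro g h l x
  have h1 := hcocycle x g h l
  have h2 := hcocycle g (g⁻¹*x*g) h l
  have h3 := hcocycle g h (h⁻¹*g⁻¹*x*g*h) l
  have h4 := hcocycle g h l (l⁻¹*h⁻¹*g⁻¹*x*g*h*l)
  simp only [hτ]
  simp only [mul_assoc, mul_inv_rev, inv_mul_cancel_left, mul_inv_cancel_left] at h1 h2 h3 h4 ⊢
  set a1 := ω g h l
  set a2 := ω x (g*h) l
  set a3 := ω x g h
  set a4 := ω x g (h*l)
  set a5 := ω (x*g) h l
  set a6 := ω (g⁻¹*(x*g)) h l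
  set a7 := ω g (g⁻¹*(x*(g*h))) l
  set a8 := ω g (g⁻¹*(x*g)) h
  set a9 := ω g (g⁻¹*(x*g)) (h*l)
  set a10 := ω h (h⁻¹*(g⁻¹*(x*(g*h)))) l
  set a11 := ω g h (h⁻¹*(g⁻¹*(x*(g*h))))
  set a12 := ω g h (h⁻¹*(g⁻¹*(x*(g*(h*l)))))
  set a13 := ω (g*h) (h⁻¹*(g⁻¹*(x*(g*h)))) l
  set a14 := ω h l (l⁻¹*(h⁻¹*(g⁻¹*(x*(g*(h*l))))))
  set a15 := ω g (h*l) (l⁻¹*(h⁻¹*(g⁻¹*(x*(g*(h*l))))))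
  set a16 := ω (g*h) l (l⁻¹*(h⁻¹*(g⁻¹*(x*(g*(h*l))))))
  apply mul_right_cancel (b := a1*a5*a12*a7*a8*a13*a10*a9)
  have H1 := congrArg Units.val h1
  have H2 := congrArg Units.val h2
  have H3 := congrArg Units.val h3
  have H4 := congrArg Units.val h4
  rw [Units.ext_iff]
  push_cast at H1 H2 H3 H4 ⊢
  field_simp
  apply mul_left_cancel₀ (show ((a5:k)*a12) ≠ 0 by simp)
  linear_combination (-(a11:k)*a3*a2*a10*a14*a15*a1) * H2 - ((a11:k)*a3*a2*a10*a5*a9) * H4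
    + ((a8:k)*a14*a6*a15*a10*a7*a11) * H1 + ((a8:k)*a14*a6*a15*a5*a4) * H3
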